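/- For the indexed-stack construction along a path: if the index i = ind(s'_m)(j) of position j in the indexed stack at step m satisfies i > 0, then i−1 is the largest integer such that the j-th letter of the encoding of the stack at step m is a copy of the top symbol of the stack at step i−1; if i = 0, then that letter is a copy of no top symbol of any earlier configuration. -/

import Mathlib

/-- Stacks with links: a symbol carries its link, represented numerically by
the order `e` of the link and the height `h` of the target stack (the target
of an `e`-link is the prefix of the enclosing `e`-stack of height `h`).
Sequences are written top-first. -/
inductive LSt (Γ : Type) where
  | sym : Γ → ℕ → ℕ → LSt Γ
  | seq : List (LSt Γ) → LSt Γ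

namespace LSt

variable {Γ : Type}

/-- The top symbol of a stack, together with its link data. -/
def topSym : LSt Γ → Option (Γ × ℕ × ℕ)
  | .sym g e h => some (g, e, h)
  | .seq [] => none
  | .seq (t :: _) => topSym t

/-- Rewrite the top symbol, keeping its link. -/
def rewTop (g : Γ) : LSt Γ → Option (LSt Γ)
  | .sym _ e h => some (.sym g e h)
  | .seq [] => none
  | .seq (t :: r) => (rewTop g t).map fun t' => .seq (t' :: r)

/-- `popOp k n s`: remove the top `(k-1)`-stack of the order-`n` stack `s`. -/
def popOp (k : ℕ) : ℕ → LSt Γ → Option (LSt Γ)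
  | _, .sym _ _ _ => none
  | _, .seq [] => none
  | n, .seq (t :: r) =>
    if k = n then (match r with | [] => none | _ :: _ => some (.seq r))
    else (popOp k (n - 1) t).map fun t' => .seq (t' :: r)

/-- `pushkOp k n s`: duplicate the top `(k-1)`-stack (links preserved). -/
def pushkOp (k : ℕ) : ℕ → LSt Γ → Option (LSt Γ)
  | n, .seq (t :: r) =>
    if k = n then some (.seq (t :: t :: r))
    else (pushkOp k (n - 1) t).map fun t' => .seq (t' :: r)
  | _, _ => none

/-- The top `e`-stack of the order-`n` stack `s` (descend along tops). -/
def stackAt (e : ℕ) : ℕ → LSt Γ → Option (LSt Γ)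
  | n, .sym g a b => if n ≤ e then some (.sym g a b) else none
  | n, .seq [] => if n ≤ e then some (.seq []) else none
  | n, .seq (t :: r) =>
    if n ≤ e then some (.seq (t :: r)) else stackAt e (n - 1) t

/-- The height of a stack (number of component stacks). -/
def height : LSt Γ → Option ℕ
  | .sym _ _ _ => none
  | .seq l => some l.length

/-- Push a symbol (with given link data) on the top 1-stack of the order-`n`
stack. -/
def pushSym (x : Γ × ℕ × ℕ) : ℕ → LSt Γ → Option (LSt Γ)
  | 1, .seq l => some (.seq (.sym x.1 x.2.1 x.2.2 :: l))
  | n + 2, .seq (t :: r) => (pushSym x (n + 1) t).map fun t' => .seq (t' :: r)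
  | _, _ => none

/-- `pushlOp n e g s`: push the symbol `g` with a link of order `e` to the
`(e-1)`-stack immediately below the top `(e-1)`-stack of the top `e`-stack. -/
def pushlOp (n e : ℕ) (g : Γ) (s : LSt Γ) : Option (LSt Γ) :=
  match stackAt e n s with
  | some t =>
    match height t with
    | some L => if 1 ≤ L then pushSym (g, e, L - 1) n s else none
    | none => none
  | none => none

/-- Truncate the top `e`-stack to its bottom `h` component stacks. -/
def truncAt (e h : ℕ) : ℕ → LSt Γ → Option (LSt Γ)
  | _, .sym _ _ _ => none
  | n, .seq [] => none
  | n, .seq (t :: r) =>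
    if n = e then
      (if 1 ≤ h ∧ h < (t :: r).length
        then some (.seq ((t :: r).drop ((t :: r).length - h)))
        else none)
    else (truncAt e h (n - 1) t).map fun t' => .seq (t' :: r)

/-- The collapse operation: follow the link of the top symbol. -/
def collapseOp (n : ℕ) (s : LSt Γ) : Option (LSt Γ) :=
  match topSym s with
  | some (_, e, h) => truncAt e h n s
  | none => none

/-- The empty order-`n` stack over the bottom symbol `b`. -/
def botN (b : Γ) : ℕ → LSt Γ
  | 0 => .sym b 1 0
  | n + 1 => .seq [botN b n]

end LSt

/-- Payload of an indexed stack symbol: the stack symbol, its index (the step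
from which the stored information is no longer updated), and its copy-history
(an identifier: the creation step, prefixed by the step of each higher-order
push that copied it; `y` is an ancestor-copy of `x` iff the identifier of `y`
is a suffix of that of `x`). -/
abbrev IPay (Γ : Type) := Γ × ℕ × List ℕ

/-- Set the index of the top symbol to `m`. -/
def setIdxTop {Γ : Type} (m : ℕ) : LSt (IPay Γ) → LSt (IPay Γ)
  | .sym p e h => .sym (p.1, m, p.2.2) e h
  | .seq [] => .seq []
  | .seq (t :: r) => .seq (setIdxTop m t :: r)

mutual
/-- Prefix `m` to the copy-history of every symbol (used for the fresh copy
created by a higher-order push at step `m`). -/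
def consIds {Γ : Type} (m : ℕ) : LSt (IPay Γ) → LSt (IPay Γ)
  | .sym p e h => .sym (p.1, p.2.1, m :: p.2.2) e h
  | .seq l => .seq (consIdsList m l)
def consIdsList {Γ : Type} (m : ℕ) : List (LSt (IPay Γ)) → List (LSt (IPay Γ))
  | [] => []
  | t :: r => consIds m t :: consIdsList m r
end

/-- Apply a function to the payload of the top symbol. -/
def mapTopP {Γ : Type} (f : IPay Γ → IPay Γ) : LSt (IPay Γ) → Option (LSt (IPay Γ))
  | .sym p e h => some (.sym (f p) e h)
  | .seq [] => none
  | .seq (t :: r) => (mapTopP f t).map fun t' => .seq (t' :: r)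

/-- Higher-order push at step `m`: duplicate the top `(k-1)`-stack; the
indices of the copied stack are inherited from the original, the former top
symbol (in the old copy) gets index `m`, and the symbols of the fresh copy
record the copying step in their history. -/
def pushkIdx {Γ : Type} (m k : ℕ) : ℕ → LSt (IPay Γ) → Option (LSt (IPay Γ))
  | n, .seq (t :: r) =>
    if k = n then some (.seq (consIds m t :: setIdxTop m t :: r))
    else (pushkIdx m k (n - 1) t).map fun t' => .seq (t' :: r)
  | _, _ => none

/-- Operations of an order-`n` CPDA (a top-rewriting is bundled with the
operation it precedes). -/
inductive IOp (Γ : Type) where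
  | rew : Γ → IOp Γ
  | push1 : ℕ → Γ → IOp Γ
  | pushk : ℕ → IOp Γ
  | popk : ℕ → IOp Γ
  | collapse : IOp Γ
  | nop : IOp Γ

/-- The step of the indexed-stack construction performed at step `m` (the
current configuration being `v_m`): on a `push₁` the former top symbol gets
index `m` and the new symbol is created with history `[m]`; on a `push_k` the
copied indices are inherited and the former top symbol gets index `m`; all
other operations inherit every index. -/
def stepIdx {Γ : Type} (m n : ℕ) : IOp Γ → LSt (IPay Γ) → Option (LSt (IPay Γ))
  | .rew g, s => mapTopP (fun p => (g, p.2.1, p.2.2)) s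
  | .push1 e g, s => LSt.pushlOp n e (g, 0, [m]) (setIdxTop m s)
  | .pushk k, s => pushkIdx m k n s
  | .popk k, s => LSt.popOp k n s
  | .collapse, s => LSt.collapseOp n s
  | .nop, s => some s

mutual
/-- The sequence of symbol payloads of a stack, listed top-first (so position
`0` is the top symbol, whose index is not yet settled). -/
def flatP {Γ : Type} : LSt (IPay Γ) → List (IPay Γ)
  | .sym p _ _ => [p]
  | .seq l => flatPList l
def flatPList {Γ : Type} : List (LSt (IPay Γ)) → List (IPay Γ)
  | [] => []
  | t :: r => flatP t ++ flatPList r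
end

namespace S16

variable {Γ : Type}

def phi (m : ℕ) (p : IPay Γ) : IPay Γ := (p.1, p.2.1, m :: p.2.2)

theorem no_suffix_of_mem_big {m : ℕ} {x y : List ℕ} (hx : m + 1 ∈ x)
    (hy : ∀ a ∈ y, a ≤ m) : ¬ x <:+ y := fun hs => by
  have := hy _ (hs.subset hx); omega

inductive WFs : LSt (IPay Γ) → Prop
  | sym (g e h) : WFs (.sym g e h)
  | seq {l} : l ≠ [] → (∀ t ∈ l, WFs t) → WFs (.seq l)

theorem flatPList_append (l₁ l₂ : List (LSt (IPay Γ))) :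
    flatPList (l₁ ++ l₂) = flatPList l₁ ++ flatPList l₂ := by
  induction l₁ with
  | nil => rfl
  | cons t r ih => simp [flatPList, ih]

theorem consIdsList_eq (m : ℕ) (l : List (LSt (IPay Γ))) :
    consIdsList m l = l.map (consIds m) := by
  induction l with
  | nil => rfl
  | cons t r ih => simp [consIdsList, ih]

mutual
theorem consIds_flatP (m : ℕ) (s : LSt (IPay Γ)) :
    flatP (consIds m s) = (flatP s).map (phi m) := by
  cases s with
  | sym p e h => rfl
  | seq l => simpa [consIds, flatP] using consIdsList_flatP m l
theorem consIdsList_flatP (m : ℕ) (l : List (LSt (IPay Γ))) :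
    flatPList (consIdsList m l) = (flatPList l).map (phi m) := by
  cases l with
  | nil => rfl
  | cons t r =>
    simp [consIdsList, flatPList, consIds_flatP m t, consIdsList_flatP m r]
end

theorem consIds_topSym (m : ℕ) : ∀ (s : LSt (IPay Γ)),
    LSt.topSym (consIds m s) = (LSt.topSym s).map (fun x => (phi m x.1, x.2))
  | .sym p a b => rfl
  | .seq [] => rfl
  | .seq (t :: r) => by
    simp only [consIds, consIdsList, LSt.topSym]
    exact consIds_topSym m t

theorem topSym_flatP : ∀ (s : LSt (IPay Γ)) {g : IPay Γ} {e h : ℕ},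
    LSt.topSym s = some (g, e, h) → ∃ r, flatP s = g :: r
  | .sym p a b, g, e, h, hs => by
    simp only [LSt.topSym, Option.some.injEq, Prod.mk.injEq] at hs
    exact ⟨[], by simp [flatP, hs.1]⟩
  | .seq [], g, e, h, hs => by simp [LSt.topSym] at hs
  | .seq (t :: r), g, e, h, hs => by
    simp only [LSt.topSym] at hs
    obtain ⟨r₀, hr₀⟩ := topSym_flatP t hs
    exact ⟨r₀ ++ flatPList r, by simp [flatP, flatPList, hr₀]⟩

theorem setIdxTop_spec (m : ℕ) : ∀ (s : LSt (IPay Γ)) {g : IPay Γ} {e h : ℕ},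
    LSt.topSym s = some (g, e, h) →
    LSt.topSym (setIdxTop m s) = some ((g.1, m, g.2.2), e, h) ∧
    ∃ r, flatP s = g :: r ∧ flatP (setIdxTop m s) = (g.1, m, g.2.2) :: r
  | .sym p a b, g, e, h, hs => by
    simp only [LSt.topSym, Option.some.injEq, Prod.mk.injEq] at hs
    obtain ⟨rfl, rfl, rfl⟩ := hs
    exact ⟨rfl, [], rfl, rfl⟩
  | .seq [], g, e, h, hs => by simp [LSt.topSym] at hs
  | .seq (t :: r), g, e, h, hs => by
    simp only [LSt.topSym] at hs
    obtain ⟨h1, r₀, h2, h3⟩ := setIdxTop_spec m t hs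
    refine ⟨h1, r₀ ++ flatPList r, by simp [flatP, flatPList, h2], ?_⟩
    simp [setIdxTop, flatP, flatPList, h3]

theorem setIdxTop_WF (m : ℕ) {s : LSt (IPay Γ)} (hw : WFs s) : WFs (setIdxTop m s) := by
  induction hw with
  | sym g e h => exact WFs.sym _ _ _
  | @seq l hne hall ih =>
    cases l with
    | nil => simp at hne
    | cons t r =>
      simp only [setIdxTop]
      refine WFs.seq (by simp) ?_
      intro x hx
      rcases List.mem_cons.1 hx with rfl | hx
      · exact ih t (by simp)
      · exact hall x (by simp [hx])

theorem consIds_WF (m : ℕ) {s : LSt (IPay Γ)} (hw : WFs s) : WFs (consIds m s) := by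
  induction hw with
  | sym g e h => exact WFs.sym _ _ _
  | @seq l hne hall ih =>
    rw [consIds, consIdsList_eq]
    refine WFs.seq (by simpa using hne) ?_
    intro x hx
    obtain ⟨t, ht, rfl⟩ := List.mem_map.1 hx
    exact ih t ht

theorem WFs_topSym {s : LSt (IPay Γ)} (hw : WFs s) :
    ∃ g e h, LSt.topSym s = some (g, e, h) := by
  induction hw with
  | sym g e h => exact ⟨g, e, h, rfl⟩
  | @seq l hne hall ih =>
    cases l with
    | nil => simp at hne
    | cons t r => simpa [LSt.topSym] using ih t (by simp)

theorem mapTopP_spec (f : IPay Γ → IPay Γ) : ∀ {s s' : LSt (IPay Γ)},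
    mapTopP f s = some s' →
    ∃ g e h r, LSt.topSym s = some (g, e, h) ∧ flatP s = g :: r ∧
      LSt.topSym s' = some (f g, e, h) ∧ flatP s' = f g :: r ∧ (WFs s → WFs s')
  | .sym p a b, s', hs => by
    simp only [mapTopP, Option.some.injEq] at hs
    subst hs
    exact ⟨p, a, b, [], rfl, rfl, rfl, rfl, fun _ => WFs.sym _ _ _⟩
  | .seq [], _, hs => by simp [mapTopP] at hs
  | .seq (t :: r), s', hs => by
    simp only [mapTopP, Option.map_eq_some_iff] at hs
    obtain ⟨t', ht', rfl⟩ := hs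
    obtain ⟨g, e, h, r₀, h1, h2, h3, h4, h5⟩ := mapTopP_spec f ht'
    refine ⟨g, e, h, r₀ ++ flatPList r, by simpa [LSt.topSym] using h1,
      by simp [flatP, flatPList, h2], by simpa [LSt.topSym] using h3,
      by simp [flatP, flatPList, h4], ?_⟩
    intro hw
    have hall : ∀ x ∈ t :: r, WFs x := by cases hw with | seq _ hh => exact hh
    refine WFs.seq (by simp) ?_
    intro x hx
    rcases List.mem_cons.1 hx with rfl | hx
    · exact h5 (hall t (by simp))
    · exact hall x (by simp [hx])

theorem pushSym_spec (x : IPay Γ × ℕ × ℕ) : ∀ (k : ℕ) {s s' : LSt (IPay Γ)},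
    LSt.pushSym x k s = some s' →
    (WFs s → WFs s') ∧ flatP s' = x.1 :: flatP s ∧ LSt.topSym s' = some x
  | 0, s, s', hs => by cases s <;> simp [LSt.pushSym] at hs
  | 1, .sym _ _ _, s', hs => by simp [LSt.pushSym] at hs
  | 1, .seq l, s', hs => by
    simp only [LSt.pushSym, Option.some.injEq] at hs
    subst hs
    refine ⟨?_, by simp [flatP, flatPList], by simp [LSt.topSym]⟩
    intro hw
    have hall : ∀ t ∈ l, WFs t := by cases hw with | seq _ hh => exact hh
    refine WFs.seq (by simp) ?_
    intro y hy
    rcases List.mem_cons.1 hy with rfl | hy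
    · exact WFs.sym _ _ _
    · exact hall y hy
  | (n+2), .sym _ _ _, s', hs => by simp [LSt.pushSym] at hs
  | (n+2), .seq [], s', hs => by simp [LSt.pushSym] at hs
  | (n+2), .seq (t :: r), s', hs => by
    simp only [LSt.pushSym, Option.map_eq_some_iff] at hs
    obtain ⟨t', ht', rfl⟩ := hs
    obtain ⟨hwf, hf, htp⟩ := pushSym_spec x (n+1) ht'
    refine ⟨?_, by simp [flatP, flatPList, hf], by simpa [LSt.topSym] using htp⟩
    intro hw
    have hall : ∀ y ∈ t :: r, WFs y := by cases hw with | seq _ hh => exact hh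
    refine WFs.seq (by simp) ?_
    intro y hy
    rcases List.mem_cons.1 hy with rfl | hy
    · exact hwf (hall t (by simp))
    · exact hall y (by simp [hy])

theorem pushlOp_spec {n e : ℕ} {g : IPay Γ} {s s' : LSt (IPay Γ)}
    (hs : LSt.pushlOp n e g s = some s') :
    ∃ L, LSt.pushSym (g, e, L) n s = some s' := by
  unfold LSt.pushlOp at hs
  split at hs
  · split at hs
    · split at hs
      · exact ⟨_, hs⟩
      · simp at hs
    · simp at hs
  · simp at hs

theorem pushkIdx_spec (m k : ℕ) : ∀ (n : ℕ) {s s' : LSt (IPay Γ)},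
    pushkIdx m k n s = some s' → WFs s →
    WFs s' ∧ ∃ g e h c rest,
      LSt.topSym s = some (g, e, h) ∧ flatP s = (g :: c) ++ rest ∧
      LSt.topSym s' = some (phi m g, e, h) ∧
      flatP s' = (phi m g :: c.map (phi m)) ++ ((g.1, m, g.2.2) :: c) ++ rest
  | n, .sym _ _ _, s', hs => by simp [pushkIdx] at hs
  | n, .seq [], s', hs => by simp [pushkIdx] at hs
  | n, .seq (t :: r), s', hs => by
    intro hw
    have hall : ∀ y ∈ t :: r, WFs y := by cases hw with | seq _ hh => exact hh
    have hwt : WFs t := hall t (by simp)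
    simp only [pushkIdx] at hs
    by_cases hk : k = n
    · rw [if_pos hk] at hs
      simp only [Option.some.injEq] at hs
      subst hs
      obtain ⟨g, e, h, htp⟩ := WFs_topSym hwt
      obtain ⟨h1, c, h2, h3⟩ := setIdxTop_spec m t htp
      refine ⟨?_, g, e, h, c, flatPList r, by simpa [LSt.topSym] using htp,
        by simp [flatP, flatPList, h2], ?_, ?_⟩
      · refine WFs.seq (by simp) ?_
        intro y hy
        rcases List.mem_cons.1 hy with rfl | hy
        · exact consIds_WF m hwt
        · rcases List.mem_cons.1 hy with rfl | hy
          · exact setIdxTop_WF m hwt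
          · exact hall y (by simp [hy])
      · simp [LSt.topSym, consIds_topSym m t, htp, phi]
      · simp [flatP, flatPList, consIds_flatP, h2, h3, phi]
    · rw [if_neg hk] at hs
      simp only [Option.map_eq_some_iff] at hs
      obtain ⟨t', ht', rfl⟩ := hs
      obtain ⟨hwf', g, e, h, c, rest, q1, q2, q3, q4⟩ := pushkIdx_spec m k (n-1) ht' hwt
      refine ⟨?_, g, e, h, c, rest ++ flatPList r, by simpa [LSt.topSym] using q1,
        by simp [flatP, flatPList, q2], by simpa [LSt.topSym] using q3,
        by simp [flatP, flatPList, q4]⟩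
      refine WFs.seq (by simp) ?_
      intro y hy
      rcases List.mem_cons.1 hy with rfl | hy
      · exact hwf'
      · exact hall y (by simp [hy])

theorem popOp_spec (k : ℕ) : ∀ (n : ℕ) {s s' : LSt (IPay Γ)},
    LSt.popOp k n s = some s' → WFs s →
    WFs s' ∧ ∃ d, flatP s = d ++ flatP s'
  | n, .sym _ _ _, s', hs => by simp [LSt.popOp] at hs
  | n, .seq [], s', hs => by simp [LSt.popOp] at hs
  | n, .seq (t :: r), s', hs => by
    intro hw
    have hall : ∀ y ∈ t :: r, WFs y := by cases hw with | seq _ hh => exact hh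
    simp only [LSt.popOp] at hs
    by_cases hk : k = n
    · rw [if_pos hk] at hs
      cases r with
      | nil => simp at hs
      | cons t₂ r₂ =>
        simp only [Option.some.injEq] at hs
        subst hs
        exact ⟨WFs.seq (by simp) (fun y hy => hall y (by simp [List.mem_cons.1 hy])),
          flatP t, by simp [flatP, flatPList]⟩
    · rw [if_neg hk] at hs
      simp only [Option.map_eq_some_iff] at hs
      obtain ⟨t', ht', rfl⟩ := hs
      obtain ⟨hw', d, hd⟩ := popOp_spec k (n-1) ht' (hall t (by simp))
      refine ⟨WFs.seq (by simp) ?_, d, by simp [flatP, flatPList, hd]⟩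
      intro y hy
      rcases List.mem_cons.1 hy with rfl | hy
      · exact hw'
      · exact hall y (by simp [hy])

theorem truncAt_spec (e h : ℕ) : ∀ (n : ℕ) {s s' : LSt (IPay Γ)},
    LSt.truncAt e h n s = some s' → WFs s →
    WFs s' ∧ ∃ d, flatP s = d ++ flatP s'
  | n, .sym _ _ _, s', hs => by simp [LSt.truncAt] at hs
  | n, .seq [], s', hs => by simp [LSt.truncAt] at hs
  | n, .seq (t :: r), s', hs => by
    intro hw
    have hall : ∀ y ∈ t :: r, WFs y := by cases hw with | seq _ hh => exact hh
    simp only [LSt.truncAt] at hs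
    by_cases hk : n = e
    · rw [if_pos hk] at hs
      by_cases hcond : 1 ≤ h ∧ h < (t :: r).length
      · rw [if_pos hcond] at hs
        simp only [Option.some.injEq] at hs
        subst hs
        constructor
        · refine WFs.seq ?_ ?_
          · apply List.ne_nil_of_length_pos
            rw [List.length_drop]
            omega
          · intro y hy
            exact hall y (List.drop_subset _ _ hy)
        · refine ⟨flatPList (List.take ((t :: r).length - h) (t :: r)), ?_⟩
          conv_lhs => rw [flatP, ← List.take_append_drop ((t :: r).length - h) (t :: r)]
          rw [flatPList_append]
          rfl
      · rw [if_neg hcond] at hs; simp at hs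
    · rw [if_neg hk] at hs
      simp only [Option.map_eq_some_iff] at hs
      obtain ⟨t', ht', rfl⟩ := hs
      obtain ⟨hw', d, hd⟩ := truncAt_spec e h (n-1) ht' (hall t (by simp))
      refine ⟨WFs.seq (by simp) ?_, d, by simp [flatP, flatPList, hd]⟩
      intro y hy
      rcases List.mem_cons.1 hy with rfl | hy
      · exact hw'
      · exact hall y (by simp [hy])

theorem collapseOp_spec {n : ℕ} {s s' : LSt (IPay Γ)}
    (hs : LSt.collapseOp n s = some s') (hw : WFs s) :
    WFs s' ∧ ∃ d, flatP s = d ++ flatP s' := by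
  unfold LSt.collapseOp at hs
  split at hs
  · exact truncAt_spec _ _ _ hs hw
  · simp at hs

end S16

namespace S16

variable {Γ : Type}

def Hent (m : ℕ) (p : IPay Γ) : Prop := (∀ a ∈ p.2.2, a ≤ m) ∧ p.2.1 ≤ m

def Hcl (s : ℕ → LSt (IPay Γ)) (m : ℕ) (p : IPay Γ) : Prop :=
  (0 < p.2.1 → ∃ q e h, LSt.topSym (s (p.2.1 - 1)) = some (q, e, h) ∧ q.2.2 <:+ p.2.2) ∧
  (∀ i', i' ≤ m → ∀ q e h, LSt.topSym (s i') = some (q, e, h) → q.2.2 <:+ p.2.2 →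
    0 < p.2.1 ∧ i' ≤ p.2.1 - 1)

structure Inv (s : ℕ → LSt (IPay Γ)) (m : ℕ) : Prop where
  wf : WFs (s m)
  ent : ∀ p ∈ flatP (s m), Hent m p
  pw : List.Pairwise (fun a b : IPay Γ => ¬ a.2.2 <:+ b.2.2) (flatP (s m))
  cl : ∀ p ∈ (flatP (s m)).tail, Hcl s m p

theorem Hent_mono {m : ℕ} {p : IPay Γ} (h : Hent m p) : Hent (m + 1) p :=
  ⟨fun a ha => le_trans (h.1 a ha) (by omega), le_trans h.2 (by omega)⟩

theorem Hcl_succ {s : ℕ → LSt (IPay Γ)} {m : ℕ} {p : IPay Γ} (h : Hcl s m p)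
    (hT : ∀ q e h', LSt.topSym (s (m + 1)) = some (q, e, h') → ¬ q.2.2 <:+ p.2.2) :
    Hcl s (m + 1) p := by
  refine ⟨h.1, fun i' hi' q e h' htop hsuf => ?_⟩
  rcases Nat.lt_or_ge i' (m + 1) with hlt | hge
  · exact h.2 i' (by omega) q e h' htop hsuf
  · have : i' = m + 1 := by omega
    subst this
    exact absurd hsuf (hT q e h' htop)

theorem Inv.top_ent {s : ℕ → LSt (IPay Γ)} {i : ℕ} (hInv : Inv s i) {q : IPay Γ} {e h : ℕ}
    (htop : LSt.topSym (s i) = some (q, e, h)) : ∀ a ∈ q.2.2, a ≤ i := by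
  obtain ⟨r, hr⟩ := topSym_flatP _ htop
  exact (hInv.ent q (by rw [hr]; simp)).1

theorem flatP_botN (b : IPay Γ) : ∀ n, flatP (LSt.botN b n) = [b]
  | 0 => rfl
  | n + 1 => by simp [LSt.botN, flatP, flatPList, flatP_botN b n]

theorem WFs_botN (b : IPay Γ) : ∀ n, WFs (LSt.botN b n)
  | 0 => WFs.sym _ _ _
  | n + 1 => by
    refine WFs.seq (by simp [LSt.botN]) ?_
    intro y hy
    simp only [LSt.botN, List.mem_singleton] at hy
    subst hy
    exact WFs_botN b n

end S16

namespace S16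

variable {Γ : Type}

theorem inv_step_sub {s : ℕ → LSt (IPay Γ)} {m : ℕ} (hm : Inv s m)
    (hwf' : WFs (s (m + 1))) (hdd : ∃ d, flatP (s m) = d ++ flatP (s (m + 1))) :
    Inv s (m + 1) := by
  obtain ⟨d, hd⟩ := hdd
  obtain ⟨q0, e0, h0, htop1⟩ := WFs_topSym hwf'
  obtain ⟨r1, hf1⟩ := topSym_flatP _ htop1
  have hsub : ∀ p ∈ flatP (s (m + 1)), p ∈ flatP (s m) := fun p hp => by
    rw [hd]; exact List.mem_append_right _ hp
  have hpwnew : List.Pairwise (fun a b : IPay Γ => ¬ a.2.2 <:+ b.2.2) (flatP (s (m + 1))) := by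
    have := hm.pw; rw [hd] at this
    exact (List.pairwise_append.1 this).2.1
  have hhead1 : ∀ p ∈ r1, ¬ q0.2.2 <:+ p.2.2 := by
    have := hpwnew; rw [hf1, List.pairwise_cons] at this; exact this.1
  obtain ⟨g, e, h, htop⟩ := WFs_topSym hm.wf
  obtain ⟨r, hF⟩ := topSym_flatP _ htop
  have htails : ∀ p ∈ r1, p ∈ r := by
    intro p hp
    have hdq : d ++ q0 :: r1 = g :: r := by rw [← hf1, ← hd, hF]
    cases d with
    | nil =>
      simp only [List.nil_append, List.cons.injEq] at hdq
      rw [← hdq.2]; exact hp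
    | cons x d' =>
      simp only [List.cons_append, List.cons.injEq] at hdq
      rw [← hdq.2]
      exact List.mem_append_right _ (List.mem_cons_of_mem _ hp)
  refine ⟨hwf', ?_, hpwnew, ?_⟩
  · exact fun p hp => Hent_mono (hm.ent p (hsub p hp))
  · rw [hf1]
    intro p hp
    simp only [List.tail_cons] at hp
    refine Hcl_succ (hm.cl p (by rw [hF]; simpa using htails p hp)) ?_
    intro q e1 h1 ht hsuf
    rw [htop1] at ht
    simp only [Option.some.injEq, Prod.mk.injEq] at ht
    rw [← ht.1] at hsuf
    exact hhead1 p hp hsuf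

theorem inv_step (n : ℕ) (s : ℕ → LSt (IPay Γ)) (ops : ℕ → IOp Γ) (m : ℕ)
    (hprev : ∀ i, i ≤ m → Inv s i)
    (hstep : stepIdx (m + 1) n (ops m) (s m) = some (s (m + 1))) :
    Inv s (m + 1) := by
  have hm := hprev m le_rfl
  cases hop : ops m with
  | nop =>
    rw [hop] at hstep
    simp only [stepIdx, Option.some.injEq] at hstep
    exact inv_step_sub hm (hstep ▸ hm.wf) ⟨[], by rw [hstep]; simp⟩
  | popk k =>
    rw [hop] at hstep
    simp only [stepIdx] at hstep
    obtain ⟨hwf', d, hd⟩ := popOp_spec _ _ hstep hm.wf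
    exact inv_step_sub hm hwf' ⟨d, hd⟩
  | collapse =>
    rw [hop] at hstep
    simp only [stepIdx] at hstep
    obtain ⟨hwf', d, hd⟩ := collapseOp_spec hstep hm.wf
    exact inv_step_sub hm hwf' ⟨d, hd⟩
  | rew g' =>
    rw [hop] at hstep
    simp only [stepIdx] at hstep
    obtain ⟨g, e, h, r, h1, h2, h3, h4, h5⟩ := mapTopP_spec _ hstep
    have hhead : ∀ p ∈ r, ¬ g.2.2 <:+ p.2.2 := by
      have := hm.pw; rw [h2, List.pairwise_cons] at this; exact this.1
    have hpwr : List.Pairwise (fun a b : IPay Γ => ¬ a.2.2 <:+ b.2.2) r := by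
      have := hm.pw; rw [h2, List.pairwise_cons] at this; exact this.2
    refine ⟨h5 hm.wf, ?_, ?_, ?_⟩
    · rw [h4]
      intro p hp
      rcases List.mem_cons.1 hp with rfl | hp
      · have := hm.ent g (by rw [h2]; simp)
        exact Hent_mono ⟨this.1, this.2⟩
      · exact Hent_mono (hm.ent p (by rw [h2]; simp [hp]))
    · rw [h4, List.pairwise_cons]
      exact ⟨fun p hp => hhead p hp, hpwr⟩
    · rw [h4]
      intro p hp
      simp only [List.tail_cons] at hp
      refine Hcl_succ (hm.cl p (by rw [h2]; simpa using hp)) ?_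
      intro q e' h' ht hsuf
      rw [h3] at ht
      simp only [Option.some.injEq, Prod.mk.injEq] at ht
      rw [← ht.1] at hsuf
      exact hhead p hp hsuf
  | push1 e' g' =>
    rw [hop] at hstep
    simp only [stepIdx] at hstep
    obtain ⟨g, e, h, htop⟩ := WFs_topSym hm.wf
    obtain ⟨L, hps⟩ := pushlOp_spec hstep
    obtain ⟨hts, r, hf1, hf2⟩ := setIdxTop_spec (m + 1) (s m) htop
    obtain ⟨hwf', hfl, htop'⟩ := pushSym_spec _ n hps
    rw [hf2] at hfl
    have hge : ∀ a ∈ g.2.2, a ≤ m := (hm.ent g (by rw [hf1]; simp)).1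
    have hre : ∀ p ∈ r, ∀ a ∈ p.2.2, a ≤ m := fun p hp =>
      (hm.ent p (by rw [hf1]; simp [hp])).1
    have hhead : ∀ p ∈ r, ¬ g.2.2 <:+ p.2.2 := by
      have := hm.pw; rw [hf1, List.pairwise_cons] at this; exact this.1
    have hpwr : List.Pairwise (fun a b : IPay Γ => ¬ a.2.2 <:+ b.2.2) r := by
      have := hm.pw; rw [hf1, List.pairwise_cons] at this; exact this.2
    refine ⟨hwf' (setIdxTop_WF _ hm.wf), ?_, ?_, ?_⟩
    · rw [hfl]
      intro p hp
      rcases List.mem_cons.1 hp with rfl | hp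
      · exact ⟨by simp, by simp⟩
      · rcases List.mem_cons.1 hp with rfl | hp
        · exact ⟨fun a ha => by have := hge a ha; omega, le_refl _⟩
        · exact Hent_mono (hm.ent p (by rw [hf1]; simp [hp]))
    · rw [hfl, List.pairwise_cons]
      constructor
      · intro b hb
        apply no_suffix_of_mem_big (m := m) (by simp)
        rcases List.mem_cons.1 hb with rfl | hb
        · exact hge
        · exact hre b hb
      · rw [List.pairwise_cons]
        exact ⟨fun b hb => hhead b hb, hpwr⟩
    · rw [hfl]
      intro p hp
      simp only [List.tail_cons] at hp
      rcases List.mem_cons.1 hp with rfl | hp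
      · constructor
        · intro _
          exact ⟨g, e, h, htop, List.suffix_refl _⟩
        · intro i' hi' q e1 h1 ht hsuf
          rcases Nat.lt_or_ge i' (m + 1) with hlt | hge2
          · exact ⟨Nat.succ_pos m, show i' ≤ m + 1 - 1 by omega⟩
          · have hieq : i' = m + 1 := by omega
            subst hieq
            rw [htop'] at ht
            simp only [Option.some.injEq, Prod.mk.injEq] at ht
            rw [← ht.1] at hsuf
            exact absurd hsuf (no_suffix_of_mem_big (by simp) hge)
      · refine Hcl_succ (hm.cl p (by rw [hf1]; simpa using hp)) ?_
        intro q e1 h1 ht hsuf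
        rw [htop'] at ht
        simp only [Option.some.injEq, Prod.mk.injEq] at ht
        rw [← ht.1] at hsuf
        exact absurd hsuf (no_suffix_of_mem_big (by simp) (hre p hp))
  | pushk k =>
    rw [hop] at hstep
    simp only [stepIdx] at hstep
    obtain ⟨hwf', g, e, h, c, rest, htopm, hfm, htop', hf'⟩ :=
      pushkIdx_spec _ _ _ hstep hm.wf
    have hfm' : flatP (s m) = g :: (c ++ rest) := by simpa using hfm
    have hge : ∀ a ∈ g.2.2, a ≤ m := (hm.ent g (by rw [hfm']; simp)).1
    have hre : ∀ p ∈ c ++ rest, ∀ a ∈ p.2.2, a ≤ m :=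
      fun p hp => (hm.ent p (by rw [hfm']; simp [hp])).1
    have hhead : ∀ p ∈ c ++ rest, ¬ g.2.2 <:+ p.2.2 := by
      have := hm.pw; rw [hfm', List.pairwise_cons] at this; exact this.1
    have hpwr : List.Pairwise (fun a b : IPay Γ => ¬ a.2.2 <:+ b.2.2) (c ++ rest) := by
      have := hm.pw; rw [hfm', List.pairwise_cons] at this; exact this.2
    have hf2 : flatP (s (m + 1)) =
        (phi (m + 1) g :: c.map (phi (m + 1))) ++ ((g.1, m + 1, g.2.2) :: (c ++ rest)) := by
      simpa [List.append_assoc] using hf'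
    have hpwgc : List.Pairwise (fun a b : IPay Γ => ¬ a.2.2 <:+ b.2.2) (g :: c) := by
      have := hm.pw; rw [hfm] at this
      exact (List.pairwise_append.1 this).1
    have hentgc : ∀ p ∈ g :: c, ∀ a ∈ p.2.2, a ≤ m := by
      intro p hp
      rcases List.mem_cons.1 hp with rfl | hp
      · exact hge
      · exact hre p (List.mem_append_left _ hp)
    refine ⟨hwf', ?_, ?_, ?_⟩
    · rw [hf2]
      intro p hp
      rcases List.mem_append.1 hp with hp | hp
      · have hp' : p ∈ (g :: c).map (phi (m + 1)) := by simpa using hp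
        obtain ⟨a, ha, rfl⟩ := List.mem_map.1 hp'
        constructor
        · intro x hx
          simp only [phi, List.mem_cons] at hx
          rcases hx with rfl | hx
          · omega
          · exact le_trans (hentgc a ha x hx) (by omega)
        · show a.2.1 ≤ m + 1
          exact le_trans (hm.ent a (by rw [hfm]; exact List.mem_append_left _ ha)).2 (by omega)
      · rcases List.mem_cons.1 hp with rfl | hp
        · exact ⟨fun a ha => le_trans (hge a ha) (by omega), le_refl _⟩
        · exact Hent_mono (hm.ent p (by rw [hfm']; simp [hp]))
    · rw [hf2, List.pairwise_append]
      refine ⟨?_, ?_, ?_⟩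
      · rw [show phi (m + 1) g :: c.map (phi (m + 1)) = (g :: c).map (phi (m + 1)) from rfl,
          List.pairwise_map]
        refine hpwgc.imp_of_mem ?_
        intro a b ha hb hnab hs
        simp only [phi] at hs
        rcases List.suffix_cons_iff.1 hs with heq | hs'
        · have : a.2.2 = b.2.2 := by
            have := heq; simp only [List.cons.injEq] at this; exact this.2
          exact hnab (this ▸ List.suffix_refl _)
        · exact no_suffix_of_mem_big (by simp) (hentgc b hb) hs'
      · rw [List.pairwise_cons]
        exact ⟨fun b hb => hhead b hb, hpwr⟩
      · intro a ha b hb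
        have ha' : a ∈ (g :: c).map (phi (m + 1)) := by simpa using ha
        obtain ⟨a', _, rfl⟩ := List.mem_map.1 ha'
        apply no_suffix_of_mem_big (m := m) (by simp [phi])
        rcases List.mem_cons.1 hb with rfl | hb
        · exact hge
        · exact hre b hb
    · rw [hf2]
      intro p hp
      simp only [List.cons_append, List.tail_cons] at hp
      rcases List.mem_append.1 hp with hp | hp
      · obtain ⟨a, ha, rfl⟩ := List.mem_map.1 hp
        have hclA := hm.cl a (by rw [hfm']; simpa using List.mem_append_left rest ha)
        constructor
        · intro hpos
          obtain ⟨q, e1, h1, ht1, hs1⟩ := hclA.1 hpos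
          exact ⟨q, e1, h1, ht1, hs1.trans (by simp only [phi]; exact List.suffix_cons _ _)⟩
        · intro i' hi' q e1 h1 ht hsuf
          simp only [phi] at hsuf
          rcases Nat.lt_or_ge i' (m + 1) with hlt | hge2
          · rcases List.suffix_cons_iff.1 hsuf with heq | hs'
            · exfalso
              have hbnd := (hprev i' (by omega)).top_ent ht
              have : m + 1 ≤ i' := hbnd (m + 1) (by rw [heq]; simp)
              omega
            · exact hclA.2 i' (by omega) q e1 h1 ht hs'
          · have hieq : i' = m + 1 := by omega
            subst hieq
            rw [htop'] at ht
            simp only [Option.some.injEq, Prod.mk.injEq] at ht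
            exfalso
            rw [← ht.1] at hsuf
            simp only [phi] at hsuf
            rcases List.suffix_cons_iff.1 hsuf with heq | hs'
            · have hgb : g.2.2 = a.2.2 := by
                simp only [List.cons.injEq] at heq; exact heq.2
              exact hhead a (List.mem_append_left _ ha) (hgb ▸ List.suffix_refl _)
            · exact no_suffix_of_mem_big (by simp) (hre a (List.mem_append_left _ ha)) hs'
      · rcases List.mem_cons.1 hp with rfl | hp
        · constructor
          · intro _
            exact ⟨g, e, h, htopm, List.suffix_refl _⟩
          · intro i' hi' q e1 h1 ht hsuf
            rcases Nat.lt_or_ge i' (m + 1) with hlt | hge2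
            · exact ⟨Nat.succ_pos m, show i' ≤ m + 1 - 1 by omega⟩
            · have hieq : i' = m + 1 := by omega
              subst hieq
              rw [htop'] at ht
              simp only [Option.some.injEq, Prod.mk.injEq] at ht
              exfalso
              rw [← ht.1] at hsuf
              exact no_suffix_of_mem_big (by simp [phi]) hge hsuf
        · refine Hcl_succ (hm.cl p (by rw [hfm']; simpa using hp)) ?_
          intro q e1 h1 ht hsuf
          rw [htop'] at ht
          simp only [Option.some.injEq, Prod.mk.injEq] at ht
          rw [← ht.1] at hsuf
          exact no_suffix_of_mem_big (by simp [phi]) (hre p hp) hsuf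

end S16

/-- Along a path of an order-`n` CPDA starting from the initial configuration,
consider the associated indexed stacks.  If the index `ix` of a (non-top)
position `j` of the stack at step `m` satisfies `ix > 0`, then `ix - 1` is
the largest step `i'` such that the `j`-th letter is a copy of the top symbol
of the stack at step `i'` (copy: the identifier of that top symbol is a
suffix of the identifier of the letter); and if `ix = 0` then the letter is a
copy of no top symbol of any configuration of the path. -/
theorem stmt16 {Γ : Type} (n : ℕ) (γ₀ : Γ)
    (s : ℕ → LSt (IPay Γ)) (ops : ℕ → IOp Γ)
    (h0 : s 0 = LSt.botN (γ₀, 0, ([] : List ℕ)) n)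
    (hstep : ∀ m, stepIdx (m + 1) n (ops m) (s m) = some (s (m + 1))) :
    ∀ m j g ix ids, (flatP (s m))[j]? = some (g, ix, ids) → 1 ≤ j →
      ((0 < ix →
        (∃ p e h, LSt.topSym (s (ix - 1)) = some (p, e, h) ∧ p.2.2 <:+ ids) ∧
        (∀ i', i' ≤ m → ∀ p e h, LSt.topSym (s i') = some (p, e, h) →
          p.2.2 <:+ ids → i' ≤ ix - 1)) ∧
      (ix = 0 → ∀ i', i' ≤ m → ∀ p e h, LSt.topSym (s i') = some (p, e, h) →
        ¬ p.2.2 <:+ ids)) := by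
  have hInv : ∀ m, ∀ i, i ≤ m → S16.Inv s i := by
    intro m
    induction m with
    | zero =>
      intro i hi
      have hi0 : i = 0 := by omega
      subst hi0
      refine ⟨?_, ?_, ?_, ?_⟩
      · rw [h0]; exact S16.WFs_botN _ n
      · rw [h0, S16.flatP_botN]
        intro p hp
        simp only [List.mem_singleton] at hp
        subst hp
        exact ⟨fun a ha => by simp at ha, le_refl _⟩
      · rw [h0, S16.flatP_botN]
        simp
      · rw [h0, S16.flatP_botN]
        intro p hp
        simp at hp
    | succ m ih =>
      intro i hi
      rcases Nat.lt_or_ge i (m + 1) with hlt | hge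
      · exact ih i (by omega)
      · have hieq : i = m + 1 := by omega
        subst hieq
        exact S16.inv_step n s ops m ih (hstep m)
  intro m j g ix ids hget hj
  have hm := hInv m m le_rfl
  have hmem : ((g, ix, ids) : IPay Γ) ∈ (flatP (s m)).tail := by
    apply List.mem_of_getElem? (i := j - 1)
    rw [List.getElem?_tail]
    have hj' : j - 1 + 1 = j := by omega
    rw [hj']
    exact hget
  have hc := hm.cl _ hmem
  refine ⟨fun hix => ⟨hc.1 hix, fun i' hi' p e h ht hs => (hc.2 i' hi' p e h ht hs).2⟩,
    fun hix0 i' hi' p e h ht hs => ?_⟩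
  have h2 : 0 < ix := (hc.2 i' hi' p e h ht hs).1
  omega
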